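/- arXiv:0804.1741 — 3 statements merged into one kernel-verified Lean document; each statement's English description precedes it below -/
import Mathlib

section
/- Let m be a natural number and α, β, γ, δ complex numbers. Then ∫₀^{2π} ∫₀^{π} (α ū + β v̄)^m (γ u + δ v)^m sinθ dθ dφ = (4π/(m+1)) · (αγ + βδ)^m. -/
open Complex Real

/-- The spinor coordinate `u = cos(θ/2)·e^{iφ/2}`. -/
noncomputable def spinU (θ φ : ℝ) : ℂ :=
  (Real.cos (θ / 2) : ℂ) * Complex.exp (Complex.I * φ / 2)

/-- The spinor coordinate `v = sin(θ/2)·e^{-iφ/2}`. -/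
noncomputable def spinV (θ φ : ℝ) : ℂ :=
  (Real.sin (θ / 2) : ℂ) * Complex.exp (-(Complex.I * φ / 2))

lemma prodFacC (a b : ℕ) : (∏ j ∈ Finset.range (b + 1), ((a:ℂ) + 1 + j)) * a.factorial
    = ((a + b + 1).factorial : ℂ) := by
  induction b with
  | zero => rw [Finset.prod_range_one]; push_cast [Nat.factorial_succ]; ring
  | succ n ih =>
      rw [Finset.prod_range_succ,
        show a + (n+1) + 1 = (a + n + 1) + 1 from by ring, Nat.factorial_succ]
      push_cast
      linear_combination ((a:ℂ) + n + 2) * ih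

lemma betaNat (a b : ℕ) : (∫ x in (0:ℝ)..1, x ^ a * (1 - x) ^ b)
    = a.factorial * b.factorial / (a + b + 1).factorial := by
  have h1 : Complex.betaIntegral ((a:ℂ) + 1) ((b:ℂ) + 1)
      = ((∫ x in (0:ℝ)..1, x ^ a * (1 - x) ^ b : ℝ) : ℂ) := by
    rw [Complex.betaIntegral, ← intervalIntegral.integral_ofReal]
    refine intervalIntegral.integral_congr fun x hx => ?_
    rw [add_sub_cancel_right, add_sub_cancel_right, Complex.cpow_natCast, Complex.cpow_natCast]
    push_cast
    ring
  have h2 := Complex.betaIntegral_eval_nat_add_one_right (u := (a:ℂ)+1)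
    (by simp; positivity) b
  have h3 := prodFacC a b
  have hane : (a.factorial : ℂ) ≠ 0 := Nat.cast_ne_zero.2 a.factorial_ne_zero
  have habne : ((a+b+1).factorial : ℂ) ≠ 0 := Nat.cast_ne_zero.2 (a+b+1).factorial_ne_zero
  have hprodne : (∏ j ∈ Finset.range (b + 1), ((a:ℂ) + 1 + j)) ≠ 0 := by
    intro h; rw [h, zero_mul] at h3; exact habne h3.symm
  have this1 := h1.symm.trans h2
  have key : ((∫ x in (0:ℝ)..1, x ^ a * (1 - x) ^ b : ℝ) : ℂ)
      = ((a.factorial * b.factorial / (a + b + 1).factorial : ℝ) : ℂ) := by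
    push_cast
    rw [this1, div_eq_div_iff hprodne habne]
    linear_combination (-(b.factorial : ℂ)) * h3
  exact_mod_cast key

lemma iTheta (a b : ℕ) :
    (∫ θ in (0:ℝ)..π, Real.cos (θ/2) ^ (2*a) * Real.sin (θ/2) ^ (2*b) * Real.sin θ)
      = 2 * (a.factorial * b.factorial / (a + b + 1).factorial) := by
  have step1 : ∀ θ : ℝ, Real.cos (θ/2) ^ (2*a) * Real.sin (θ/2) ^ (2*b) * Real.sin θ
      = ((fun u => ((1+u)/2)^a * ((1-u)/2)^b) ∘ Real.cos) θ * Real.sin θ := by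
    intro θ
    have hc : Real.cos (θ/2) ^ 2 = (1 + Real.cos θ) / 2 := by
      rw [Real.cos_sq, show 2*(θ/2) = θ from by ring]; ring
    have hs : Real.sin (θ/2) ^ 2 = (1 - Real.cos θ) / 2 := by
      rw [Real.sin_sq, hc]; ring
    simp only [Function.comp]
    rw [pow_mul, pow_mul, hc, hs]
  rw [intervalIntegral.integral_congr (fun θ _ => step1 θ)]
  have h1 : (∫ θ in (0:ℝ)..π, ((fun u => ((1+u)/2)^a * ((1-u)/2)^b) ∘ Real.cos) θ * (-Real.sin θ))
      = ∫ u in (1:ℝ)..(-1), ((1+u)/2)^a * ((1-u)/2)^b := by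
    have := intervalIntegral.integral_comp_mul_deriv (a := (0:ℝ)) (b := π)
      (f := Real.cos) (f' := fun θ => -Real.sin θ)
      (g := fun u => ((1+u)/2)^a * ((1-u)/2)^b)
      (fun x _ => Real.hasDerivAt_cos x) (by fun_prop) (by fun_prop)
    rwa [Real.cos_zero, Real.cos_pi] at this
  have e1 : (∫ θ in (0:ℝ)..π, ((fun u => ((1+u)/2)^a * ((1-u)/2)^b) ∘ Real.cos) θ * (-Real.sin θ))
      = -(∫ θ in (0:ℝ)..π, ((fun u => ((1+u)/2)^a * ((1-u)/2)^b) ∘ Real.cos) θ * Real.sin θ) := by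
    simp only [mul_neg, intervalIntegral.integral_neg]
  have e2 : (∫ u in (1:ℝ)..(-1), ((1+u)/2)^a * ((1-u)/2)^b)
      = -(∫ u in (-1:ℝ)..1, ((1+u)/2)^a * ((1-u)/2)^b) :=
    intervalIntegral.integral_symm (-1) 1
  have h2 : (∫ θ in (0:ℝ)..π, ((fun u => ((1+u)/2)^a * ((1-u)/2)^b) ∘ Real.cos) θ * Real.sin θ)
      = ∫ u in (-1:ℝ)..1, ((1+u)/2)^a * ((1-u)/2)^b := by
    rw [e1, e2] at h1; linarith
  rw [h2]
  have h3 : (∫ u in (-1:ℝ)..1, ((1+u)/2)^a * ((1-u)/2)^b)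
      = 2 * ∫ t in (0:ℝ)..1, t^a * (1-t)^b := by
    have key := intervalIntegral.integral_comp_mul_deriv (a := (-1:ℝ)) (b := 1)
      (f := fun u => (1+u)/2) (f' := fun _ => (1:ℝ)/2)
      (g := fun t => 2 * (t^a * (1-t)^b))
      (fun x _ => by simpa using ((hasDerivAt_id x).const_add 1).div_const 2)
      (by fun_prop) (by fun_prop)
    norm_num [Function.comp] at key
    have e3 : (∫ x in (-1:ℝ)..1, ((1+x)/2)^a * (1-(1+x)/2)^b)
        = ∫ x in (-1:ℝ)..1, ((1+x)/2)^a * ((1-x)/2)^b :=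
      intervalIntegral.integral_congr fun x _ => by
        rw [show (1:ℝ) - (1+x)/2 = (1-x)/2 from by ring]
    rw [e3] at key
    linarith
  rw [h3, betaNat]

lemma iPhi (n : ℤ) : (∫ φ in (0:ℝ)..(2*π), Complex.exp (Complex.I * n * φ))
    = if n = 0 then ((2*π : ℝ) : ℂ) else 0 := by
  rcases eq_or_ne n 0 with h | h
  · simp [h]
  · rw [if_neg h]
    have hc : (Complex.I * n) ≠ 0 := by
      simp [Complex.I_ne_zero, h]
    rw [integral_exp_mul_complex hc]
    rw [show Complex.I * n * ((2*π : ℝ) : ℂ) = (n : ℂ) * (2 * (π:ℝ) * Complex.I) from by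
      push_cast; ring]
    rw [Complex.exp_int_mul_two_pi_mul_I]
    simp

lemma conjU (θ φ : ℝ) : (starRingEnd ℂ) (spinU θ φ)
    = (Real.cos (θ/2) : ℂ) * Complex.exp (-(Complex.I * φ / 2)) := by
  simp only [spinU, map_mul, Complex.conj_ofReal, ← Complex.exp_conj, map_div₀,
    Complex.conj_I, map_ofNat]
  ring_nf

lemma conjV (θ φ : ℝ) : (starRingEnd ℂ) (spinV θ φ)
    = (Real.sin (θ/2) : ℂ) * Complex.exp (Complex.I * φ / 2) := by
  simp only [spinV, map_mul, Complex.conj_ofReal, ← Complex.exp_conj, map_neg, map_div₀,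
    Complex.conj_I, map_ofNat]
  ring_nf

lemma termEq (m j k : ℕ) (hj : j ≤ m) (hk : k ≤ m) (α β γ δ : ℂ) (θ φ : ℝ) :
    (α * (starRingEnd ℂ) (spinU θ φ)) ^ j * (β * (starRingEnd ℂ) (spinV θ φ)) ^ (m - j)
        * (m.choose j : ℂ) *
      ((γ * spinU θ φ) ^ k * (δ * spinV θ φ) ^ (m - k) * (m.choose k : ℂ)) * (Real.sin θ : ℂ)
    = (m.choose j : ℂ) * (m.choose k : ℂ) * α ^ j * β ^ (m-j) * γ ^ k * δ ^ (m-k) *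
        Complex.exp (Complex.I * (((k : ℤ) : ℂ) - ((j : ℤ) : ℂ)) * φ) *
        ((Real.cos (θ/2) ^ (j+k) * Real.sin (θ/2) ^ ((m-j)+(m-k)) * Real.sin θ : ℝ) : ℂ) := by
  have hexp : Complex.exp (-(Complex.I * φ / 2)) ^ j * Complex.exp (Complex.I * φ / 2) ^ (m-j)
      * Complex.exp (Complex.I * φ / 2) ^ k * Complex.exp (-(Complex.I * φ / 2)) ^ (m-k)
      = Complex.exp (Complex.I * (((k : ℤ) : ℂ) - ((j : ℤ) : ℂ)) * φ) := by
    rw [← Complex.exp_nat_mul, ← Complex.exp_nat_mul, ← Complex.exp_nat_mul,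
      ← Complex.exp_nat_mul, ← Complex.exp_add, ← Complex.exp_add, ← Complex.exp_add]
    congr 1
    push_cast [Nat.cast_sub hj, Nat.cast_sub hk]
    ring
  rw [conjU, conjV, spinU, spinV]
  calc (α * ((Real.cos (θ/2) : ℂ) * Complex.exp (-(Complex.I * φ / 2)))) ^ j
        * (β * ((Real.sin (θ/2) : ℂ) * Complex.exp (Complex.I * φ / 2))) ^ (m - j)
        * (m.choose j : ℂ) *
      ((γ * ((Real.cos (θ/2) : ℂ) * Complex.exp (Complex.I * φ / 2))) ^ k
        * (δ * ((Real.sin (θ/2) : ℂ) * Complex.exp (-(Complex.I * φ / 2)))) ^ (m - k)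
        * (m.choose k : ℂ)) * (Real.sin θ : ℂ)
      = (m.choose j : ℂ) * (m.choose k : ℂ) * α ^ j * β ^ (m-j) * γ ^ k * δ ^ (m-k) *
        (Complex.exp (-(Complex.I * φ / 2)) ^ j * Complex.exp (Complex.I * φ / 2) ^ (m-j)
          * Complex.exp (Complex.I * φ / 2) ^ k * Complex.exp (-(Complex.I * φ / 2)) ^ (m-k)) *
        ((Real.cos (θ/2) : ℂ) ^ j * (Real.cos (θ/2) : ℂ) ^ k
          * ((Real.sin (θ/2) : ℂ) ^ (m-j) * (Real.sin (θ/2) : ℂ) ^ (m-k))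
          * (Real.sin θ : ℂ)) := by
        ring
    _ = _ := by
        rw [hexp]
        push_cast
        rw [pow_add, pow_add]

noncomputable def Rint (m j k : ℕ) : ℝ :=
  ∫ θ in (0:ℝ)..π, Real.cos (θ/2)^(j+k) * Real.sin (θ/2)^((m-j)+(m-k)) * Real.sin θ

/-- `∫₀^{2π} ∫₀^{π} (αū + βv̄)^m (γu + δv)^m sinθ dθ dφ = (4π/(m+1))·(αγ + βδ)^m`. -/
theorem spinor_power_integral_eq (m : ℕ) (α β γ δ : ℂ) :
    (∫ φ in (0:ℝ)..(2 * Real.pi), ∫ θ in (0:ℝ)..Real.pi,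
        (α * (starRingEnd ℂ) (spinU θ φ) + β * (starRingEnd ℂ) (spinV θ φ)) ^ m *
          (γ * spinU θ φ + δ * spinV θ φ) ^ m * (Real.sin θ : ℂ))
      = ((4 * Real.pi / (m + 1) : ℝ) : ℂ) * (α * γ + β * δ) ^ m := by
  have hpt : ∀ φ θ : ℝ,
      (α * (starRingEnd ℂ) (spinU θ φ) + β * (starRingEnd ℂ) (spinV θ φ)) ^ m *
          (γ * spinU θ φ + δ * spinV θ φ) ^ m * (Real.sin θ : ℂ)
      = ∑ p ∈ Finset.range (m+1) ×ˢ Finset.range (m+1),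
          (m.choose p.1 : ℂ) * (m.choose p.2 : ℂ) * α^p.1 * β^(m-p.1) * γ^p.2 * δ^(m-p.2) *
            Complex.exp (Complex.I * (((p.2 : ℤ) : ℂ) - ((p.1 : ℤ) : ℂ)) * φ) *
            ((Real.cos (θ/2)^(p.1+p.2) * Real.sin (θ/2)^((m-p.1)+(m-p.2)) * Real.sin θ : ℝ) : ℂ) := by
    intro φ θ
    rw [Finset.sum_product, add_pow, add_pow, Finset.sum_mul_sum, Finset.sum_mul]
    refine Finset.sum_congr rfl fun j hj => ?_
    rw [Finset.sum_mul]
    refine Finset.sum_congr rfl fun k hk => ?_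
    exact termEq m j k (Nat.lt_succ_iff.mp (Finset.mem_range.mp hj))
      (Nat.lt_succ_iff.mp (Finset.mem_range.mp hk)) α β γ δ θ φ
  have hInner : ∀ φ : ℝ,
      (∫ θ in (0:ℝ)..Real.pi,
        (α * (starRingEnd ℂ) (spinU θ φ) + β * (starRingEnd ℂ) (spinV θ φ)) ^ m *
          (γ * spinU θ φ + δ * spinV θ φ) ^ m * (Real.sin θ : ℂ))
      = ∑ p ∈ Finset.range (m+1) ×ˢ Finset.range (m+1),
          (m.choose p.1 : ℂ) * (m.choose p.2 : ℂ) * α^p.1 * β^(m-p.1) * γ^p.2 * δ^(m-p.2) *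
            Complex.exp (Complex.I * (((p.2 : ℤ) : ℂ) - ((p.1 : ℤ) : ℂ)) * φ) *
            ((Rint m p.1 p.2 : ℝ) : ℂ) := by
    intro φ
    rw [intervalIntegral.integral_congr (fun θ _ => hpt φ θ)]
    rw [intervalIntegral.integral_finset_sum (fun p _ =>
      Continuous.intervalIntegrable (by fun_prop) _ _)]
    refine Finset.sum_congr rfl fun p hp => ?_
    rw [intervalIntegral.integral_const_mul, intervalIntegral.integral_ofReal]
    rfl
  rw [intervalIntegral.integral_congr (fun φ _ => hInner φ)]
  rw [intervalIntegral.integral_finset_sum (fun p _ =>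
    Continuous.intervalIntegrable (by fun_prop) _ _)]
  have hterm : ∀ p ∈ Finset.range (m+1) ×ˢ Finset.range (m+1),
      (∫ φ in (0:ℝ)..(2*π),
        (m.choose p.1 : ℂ) * (m.choose p.2 : ℂ) * α^p.1 * β^(m-p.1) * γ^p.2 * δ^(m-p.2) *
          Complex.exp (Complex.I * (((p.2 : ℤ) : ℂ) - ((p.1 : ℤ) : ℂ)) * φ) *
          ((Rint m p.1 p.2 : ℝ) : ℂ))
      = (m.choose p.1 : ℂ) * (m.choose p.2 : ℂ) * α^p.1 * β^(m-p.1) * γ^p.2 * δ^(m-p.2) *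
        (if p.1 = p.2 then ((2*π : ℝ) : ℂ) else 0) * ((Rint m p.1 p.2 : ℝ) : ℂ) := by
    intro p hp
    rw [intervalIntegral.integral_mul_const, intervalIntegral.integral_const_mul]
    rw [show (((p.2 : ℤ) : ℂ) - ((p.1 : ℤ) : ℂ)) = (((p.2 : ℤ) - (p.1 : ℤ) : ℤ) : ℂ) from by
      push_cast; ring]
    rw [iPhi ((p.2 : ℤ) - (p.1 : ℤ))]
    by_cases hd : p.1 = p.2
    · rw [if_pos hd, if_pos (by rw [hd, sub_self])]
    · rw [if_neg hd, if_neg (fun h => hd (by exact_mod_cast (sub_eq_zero.mp h).symm))]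
  rw [Finset.sum_congr rfl hterm, Finset.sum_product]
  have hdiag : ∀ j ∈ Finset.range (m+1),
      (∑ k ∈ Finset.range (m+1),
        (m.choose j : ℂ) * (m.choose k : ℂ) * α^j * β^(m-j) * γ^k * δ^(m-k) *
          (if j = k then ((2*π : ℝ) : ℂ) else 0) * ((Rint m j k : ℝ) : ℂ))
      = (m.choose j : ℂ) * (m.choose j : ℂ) * α^j * β^(m-j) * γ^j * δ^(m-j) *
          ((2*π : ℝ) : ℂ) * ((Rint m j j : ℝ) : ℂ) := by
    intro j hj
    rw [Finset.sum_eq_single_of_mem j hj (fun k _ hkj => by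
      rw [if_neg (fun h => hkj h.symm)]; ring)]
    rw [if_pos rfl]
  rw [Finset.sum_congr rfl hdiag]
  have hRval : ∀ j, j ≤ m → Rint m j j
      = 2 * (j.factorial * (m-j).factorial / (m + 1).factorial) := by
    intro j hj
    rw [Rint, show j + j = 2*j from (two_mul j).symm,
      show (m-j) + (m-j) = 2*(m-j) from (two_mul (m-j)).symm, iTheta,
      Nat.add_sub_cancel' hj]
  rw [add_pow, Finset.mul_sum]
  refine Finset.sum_congr rfl fun j hj => ?_
  have hjm : j ≤ m := Nat.lt_succ_iff.mp (Finset.mem_range.mp hj)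
  rw [hRval j hjm]
  have hfac : (m.choose j : ℂ) * (j.factorial : ℂ) * ((m-j).factorial : ℂ)
      = (m.factorial : ℂ) := by
    exact_mod_cast congrArg Nat.cast (Nat.choose_mul_factorial_mul_factorial hjm)
  have hm1 : ((m+1).factorial : ℂ) = ((m : ℂ) + 1) * (m.factorial : ℂ) := by
    exact_mod_cast congrArg Nat.cast (Nat.factorial_succ m)
  have hne1 : ((m : ℂ) + 1) ≠ 0 := Nat.cast_add_one_ne_zero m
  have hne2 : (m.factorial : ℂ) ≠ 0 := Nat.cast_ne_zero.2 m.factorial_ne_zero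
  push_cast [hm1]
  field_simp
  linear_combination (4 * α^j * β^(m-j) * γ^j * δ^(m-j) * (m.choose j : ℂ)) * hfac
end

section
/- Let R be a (possibly noncommutative) associative ring with unit containing elements a_j, b_j, a_j†, b_j† for 1 ≤ j ≤ L satisfying the bosonic commutation relations a_i a_j† − a_j† a_i = δ_{ij}·1 and b_i b_j† − b_j† b_i = δ_{ij}·1, while every other pair of these generators commutes (all daggered elements commute among themselves, all undaggered elements commute among themselves, and a-type elements commute with b-type elements regardless of daggers). Set C_j = a_j† b_{j+1}† − b_j† a_{j+1}† for 1 ≤ j ≤ L−1. Then for any natural numbers M₁, …, M_{L−1}, both S⁺ = Σ_{j=1}^{L} a_j† b_j and S⁻ = Σ_{j=1}^{L} b_j† a_j commute with the product Π_{j=1}^{L−1} C_j^{M_j}. -/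
private lemma swap4 {R : Type*} [Ring R] (A B C D e : R)
    (hBC : B * C = C * B) (hBD : B * D = D * B + e)
    (hAC : A * C = C * A) (hAD : A * D = D * A) :
    A * B * (C * D) = C * D * (A * B) + A * C * e := by
  calc A * B * (C * D)
      = A * (B * C) * D := by noncomm_ring
    _ = A * (C * B) * D := by rw [hBC]
    _ = (A * C) * (B * D) := by noncomm_ring
    _ = (A * C) * (D * B + e) := by rw [hBD]
    _ = ((C * A) * D) * B + A * C * e := by rw [hAC]; noncomm_ring
    _ = (C * (D * A)) * B + A * C * e := by rw [mul_assoc C A D, hAD]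
    _ = C * D * (A * B) + A * C * e := by noncomm_ring

private lemma swap4' {R : Type*} [Ring R] (A B C D e : R)
    (hBC : B * C = C * B + e) (hBD : B * D = D * B)
    (hAC : A * C = C * A) (hAD : A * D = D * A) :
    A * B * (C * D) = C * D * (A * B) + A * e * D := by
  calc A * B * (C * D)
      = A * (B * C) * D := by noncomm_ring
    _ = A * (C * B + e) * D := by rw [hBC]
    _ = (A * C) * (B * D) + A * e * D := by noncomm_ring
    _ = (A * C) * (D * B) + A * e * D := by rw [hBD]
    _ = ((C * A) * D) * B + A * e * D := by rw [hAC]; noncomm_ring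
    _ = (C * (D * A)) * B + A * e * D := by rw [mul_assoc C A D, hAD]
    _ = C * D * (A * B) + A * e * D := by noncomm_ring

private lemma aux_commute {R : Type*} [Ring R] (L : ℕ) (y xd yd : ℕ → R)
    (hyyd : ∀ i ∈ Finset.Icc 1 L, ∀ j ∈ Finset.Icc 1 L,
      y i * yd j - yd j * y i = if i = j then 1 else 0)
    (hxdxd : ∀ i ∈ Finset.Icc 1 L, ∀ j ∈ Finset.Icc 1 L, xd i * xd j = xd j * xd i)
    (hxdyd : ∀ i ∈ Finset.Icc 1 L, ∀ j ∈ Finset.Icc 1 L, xd i * yd j = yd j * xd i)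
    (hxdy : ∀ i ∈ Finset.Icc 1 L, ∀ j ∈ Finset.Icc 1 L, xd i * y j = y j * xd i)
    (k : ℕ) (hk : k ∈ Finset.Icc 1 L) (hk1 : k + 1 ∈ Finset.Icc 1 L) :
    Commute (∑ j ∈ Finset.Icc 1 L, xd j * y j)
      (xd k * yd (k + 1) - yd k * xd (k + 1)) := by
  have per : ∀ j ∈ Finset.Icc 1 L,
      xd j * y j * (xd k * yd (k + 1) - yd k * xd (k + 1))
        = (xd k * yd (k + 1) - yd k * xd (k + 1)) * (xd j * y j)
          + ((if j = k + 1 then xd j * xd k else 0)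
             - (if j = k then xd j * xd (k + 1) else 0)) := by
    intro j hj
    have h1 : y j * yd (k + 1) = yd (k + 1) * y j + (if j = k + 1 then 1 else 0) :=
      sub_eq_iff_eq_add'.mp (hyyd j hj (k + 1) hk1)
    have h2 : y j * yd k = yd k * y j + (if j = k then 1 else 0) :=
      sub_eq_iff_eq_add'.mp (hyyd j hj k hk)
    have T1 := swap4 (xd j) (y j) (xd k) (yd (k + 1)) _
      ((hxdy k hk j hj).symm) h1 (hxdxd j hj k hk) (hxdyd j hj (k + 1) hk1)
    have T2 := swap4' (xd j) (y j) (yd k) (xd (k + 1)) _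
      h2 ((hxdy (k + 1) hk1 j hj).symm) (hxdyd j hj k hk) (hxdxd j hj (k + 1) hk1)
    rw [mul_sub, T1, T2, sub_mul]
    split_ifs <;> noncomm_ring
  have hsum : (∑ j ∈ Finset.Icc 1 L,
      ((if j = k + 1 then xd j * xd k else 0)
        - (if j = k then xd j * xd (k + 1) else 0))) = 0 := by
    rw [Finset.sum_sub_distrib, Finset.sum_ite_eq', Finset.sum_ite_eq',
      if_pos hk1, if_pos hk, hxdxd (k + 1) hk1 k hk, sub_self]
  show (∑ j ∈ Finset.Icc 1 L, xd j * y j) * (xd k * yd (k + 1) - yd k * xd (k + 1))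
      = (xd k * yd (k + 1) - yd k * xd (k + 1)) * ∑ j ∈ Finset.Icc 1 L, xd j * y j
  rw [Finset.sum_mul, Finset.mul_sum, Finset.sum_congr rfl per,
    Finset.sum_add_distrib, hsum, add_zero]

/-- The total spin raising and lowering operators `S⁺ = Σ_j a_j†b_j` and
`S⁻ = Σ_j b_j†a_j` commute with the product of valence bonds
`∏_{j=1}^{L-1} (a_j†b_{j+1}† − b_j†a_{j+1}†)^{M_j}` (the daggered generators
commute, so the ordered product below is the unambiguous product). -/
theorem total_spin_pm_commutes_with_valence_bonds (R : Type*) [Ring R] (L : ℕ)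
    (a b ad bd : ℕ → R)
    (haad : ∀ i ∈ Finset.Icc 1 L, ∀ j ∈ Finset.Icc 1 L,
      a i * ad j - ad j * a i = if i = j then 1 else 0)
    (hbbd : ∀ i ∈ Finset.Icc 1 L, ∀ j ∈ Finset.Icc 1 L,
      b i * bd j - bd j * b i = if i = j then 1 else 0)
    (haa : ∀ i ∈ Finset.Icc 1 L, ∀ j ∈ Finset.Icc 1 L, a i * a j = a j * a i)
    (hbb : ∀ i ∈ Finset.Icc 1 L, ∀ j ∈ Finset.Icc 1 L, b i * b j = b j * b i)
    (hadad : ∀ i ∈ Finset.Icc 1 L, ∀ j ∈ Finset.Icc 1 L, ad i * ad j = ad j * ad i)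
    (hbdbd : ∀ i ∈ Finset.Icc 1 L, ∀ j ∈ Finset.Icc 1 L, bd i * bd j = bd j * bd i)
    (hab : ∀ i ∈ Finset.Icc 1 L, ∀ j ∈ Finset.Icc 1 L, a i * b j = b j * a i)
    (habd : ∀ i ∈ Finset.Icc 1 L, ∀ j ∈ Finset.Icc 1 L, a i * bd j = bd j * a i)
    (hadb : ∀ i ∈ Finset.Icc 1 L, ∀ j ∈ Finset.Icc 1 L, ad i * b j = b j * ad i)
    (hadbd : ∀ i ∈ Finset.Icc 1 L, ∀ j ∈ Finset.Icc 1 L, ad i * bd j = bd j * ad i)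
    (M : ℕ → ℕ) :
    (∑ j ∈ Finset.Icc 1 L, ad j * b j) *
        ((List.range (L - 1)).map
          (fun k => (ad (k + 1) * bd (k + 2) - bd (k + 1) * ad (k + 2)) ^ M (k + 1))).prod
      = ((List.range (L - 1)).map
          (fun k => (ad (k + 1) * bd (k + 2) - bd (k + 1) * ad (k + 2)) ^ M (k + 1))).prod *
        (∑ j ∈ Finset.Icc 1 L, ad j * b j) ∧
    (∑ j ∈ Finset.Icc 1 L, bd j * a j) *
        ((List.range (L - 1)).map
          (fun k => (ad (k + 1) * bd (k + 2) - bd (k + 1) * ad (k + 2)) ^ M (k + 1))).prod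
      = ((List.range (L - 1)).map
          (fun k => (ad (k + 1) * bd (k + 2) - bd (k + 1) * ad (k + 2)) ^ M (k + 1))).prod *
        (∑ j ∈ Finset.Icc 1 L, bd j * a j) := by
  constructor
  · refine (Commute.list_prod_right _ _ ?_).eq
    intro p hp
    obtain ⟨k, hkmem, rfl⟩ := List.mem_map.1 hp
    have hk := List.mem_range.1 hkmem
    have h1 : k + 1 ∈ Finset.Icc 1 L := by rw [Finset.mem_Icc]; omega
    have h2 : k + 1 + 1 ∈ Finset.Icc 1 L := by rw [Finset.mem_Icc]; omega
    exact (aux_commute L b ad bd hbbd hadad hadbd hadb (k + 1) h1 h2).pow_right _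
  · refine (Commute.list_prod_right _ _ ?_).eq
    intro p hp
    obtain ⟨k, hkmem, rfl⟩ := List.mem_map.1 hp
    have hk := List.mem_range.1 hkmem
    have h1 : k + 1 ∈ Finset.Icc 1 L := by rw [Finset.mem_Icc]; omega
    have h2 : k + 1 + 1 ∈ Finset.Icc 1 L := by rw [Finset.mem_Icc]; omega
    have h := (aux_commute L a bd ad haad hbdbd
      (fun i hi j hj => (hadbd j hj i hi).symm)
      (fun i hi j hj => (habd j hj i hi).symm) (k + 1) h1 h2).neg_right
    rw [neg_sub] at h
    exact h.pow_right _
end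

section
/- Let R be a (possibly noncommutative) associative ring with unit containing elements a_j, b_j, a_j†, b_j† for 1 ≤ j ≤ L satisfying the bosonic commutation relations a_i a_j† − a_j† a_i = δ_{ij}·1 and b_i b_j† − b_j† b_i = δ_{ij}·1, while every other pair of these generators commutes (all daggered elements commute among themselves, all undaggered elements commute among themselves, and a-type elements commute with b-type elements regardless of daggers). Set C_j = a_j† b_{j+1}† − b_j† a_{j+1}† for 1 ≤ j ≤ L−1. Then for any natural numbers M₁, …, M_{L−1}, the element Σ_{j=1}^{L} (a_j† a_j − b_j† b_j) commutes with the product Π_{j=1}^{L−1} C_j^{M_j}. -/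
/-- Twice the total `Sᶻ` operator `Σ_j (a_j†a_j − b_j†b_j)` commutes with the
product of valence bonds `∏_{j=1}^{L-1} (a_j†b_{j+1}† − b_j†a_{j+1}†)^{M_j}`
(the daggered generators commute, so the ordered product below is the
unambiguous product). -/
theorem total_spin_z_commutes_with_valence_bonds (R : Type*) [Ring R] (L : ℕ)
    (a b ad bd : ℕ → R)
    (haad : ∀ i ∈ Finset.Icc 1 L, ∀ j ∈ Finset.Icc 1 L,
      a i * ad j - ad j * a i = if i = j then 1 else 0)
    (hbbd : ∀ i ∈ Finset.Icc 1 L, ∀ j ∈ Finset.Icc 1 L,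
      b i * bd j - bd j * b i = if i = j then 1 else 0)
    (haa : ∀ i ∈ Finset.Icc 1 L, ∀ j ∈ Finset.Icc 1 L, a i * a j = a j * a i)
    (hbb : ∀ i ∈ Finset.Icc 1 L, ∀ j ∈ Finset.Icc 1 L, b i * b j = b j * b i)
    (hadad : ∀ i ∈ Finset.Icc 1 L, ∀ j ∈ Finset.Icc 1 L, ad i * ad j = ad j * ad i)
    (hbdbd : ∀ i ∈ Finset.Icc 1 L, ∀ j ∈ Finset.Icc 1 L, bd i * bd j = bd j * bd i)
    (hab : ∀ i ∈ Finset.Icc 1 L, ∀ j ∈ Finset.Icc 1 L, a i * b j = b j * a i)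
    (habd : ∀ i ∈ Finset.Icc 1 L, ∀ j ∈ Finset.Icc 1 L, a i * bd j = bd j * a i)
    (hadb : ∀ i ∈ Finset.Icc 1 L, ∀ j ∈ Finset.Icc 1 L, ad i * b j = b j * ad i)
    (hadbd : ∀ i ∈ Finset.Icc 1 L, ∀ j ∈ Finset.Icc 1 L, ad i * bd j = bd j * ad i)
    (M : ℕ → ℕ) :
    (∑ j ∈ Finset.Icc 1 L, (ad j * a j - bd j * b j)) *
        ((List.range (L - 1)).map
          (fun k => (ad (k + 1) * bd (k + 2) - bd (k + 1) * ad (k + 2)) ^ M (k + 1))).prod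
      = ((List.range (L - 1)).map
          (fun k => (ad (k + 1) * bd (k + 2) - bd (k + 1) * ad (k + 2)) ^ M (k + 1))).prod *
        (∑ j ∈ Finset.Icc 1 L, (ad j * a j - bd j * b j)) := by
  set N : R := ∑ j ∈ Finset.Icc 1 L, (ad j * a j - bd j * b j) with hN
  -- N raises ad i by one: N * ad i = ad i * N + ad i
  have hNad : ∀ i ∈ Finset.Icc 1 L, N * ad i = ad i * N + ad i := by
    intro i hi
    have key : ∀ j ∈ Finset.Icc 1 L,
        (ad j * a j - bd j * b j) * ad i
          = ad i * (ad j * a j - bd j * b j) + (if j = i then ad i else 0) := by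
      intro j hj
      have h1 : a j * ad i = ad i * a j + (if j = i then 1 else 0) := by
        have h := haad j hj i hi; rw [← h]; noncomm_ring
      have h2 : b j * ad i = ad i * b j := (hadb i hi j hj).symm
      have h3 : bd j * ad i = ad i * bd j := (hadbd i hi j hj).symm
      have h4 : ad j * ad i = ad i * ad j := hadad j hj i hi
      by_cases hji : j = i
      · subst hji
        simp only [if_pos rfl]
        calc (ad j * a j - bd j * b j) * ad j
            = ad j * (a j * ad j) - bd j * (b j * ad j) := by noncomm_ring
          _ = ad j * (ad j * a j + 1) - bd j * (ad j * b j) := by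
              rw [h1, if_pos rfl, h2]
          _ = ad j * (ad j * a j - bd j * b j) + ad j := by
              rw [show bd j * (ad j * b j) = ad j * (bd j * b j) by
                rw [← mul_assoc, h3, mul_assoc]]
              noncomm_ring
      · simp only [if_neg hji, add_zero]
        calc (ad j * a j - bd j * b j) * ad i
            = ad j * (a j * ad i) - bd j * (b j * ad i) := by noncomm_ring
          _ = ad j * (ad i * a j + 0) - bd j * (ad i * b j) := by
              rw [h1, if_neg hji, h2]
          _ = ad i * (ad j * a j - bd j * b j) := by
              rw [show bd j * (ad i * b j) = ad i * (bd j * b j) by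
                rw [← mul_assoc, h3, mul_assoc], add_zero, ← mul_assoc, h4]
              noncomm_ring
    calc N * ad i = ∑ j ∈ Finset.Icc 1 L, (ad j * a j - bd j * b j) * ad i := by
          rw [hN, Finset.sum_mul]
      _ = ∑ j ∈ Finset.Icc 1 L,
            (ad i * (ad j * a j - bd j * b j) + (if j = i then ad i else 0)) :=
          Finset.sum_congr rfl key
      _ = ad i * N + ad i := by
          rw [Finset.sum_add_distrib, ← Finset.mul_sum, Finset.sum_ite_eq' _ i,
            if_pos hi]
  -- N lowers bd i by one: N * bd i = bd i * N - bd i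
  have hNbd : ∀ i ∈ Finset.Icc 1 L, N * bd i = bd i * N - bd i := by
    intro i hi
    have key : ∀ j ∈ Finset.Icc 1 L,
        (ad j * a j - bd j * b j) * bd i
          = bd i * (ad j * a j - bd j * b j) - (if j = i then bd i else 0) := by
      intro j hj
      have h1 : b j * bd i = bd i * b j + (if j = i then 1 else 0) := by
        have h := hbbd j hj i hi; rw [← h]; noncomm_ring
      have h2 : a j * bd i = bd i * a j := habd j hj i hi
      have h3 : ad j * bd i = bd i * ad j := hadbd j hj i hi
      have h4 : bd j * bd i = bd i * bd j := hbdbd j hj i hi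
      by_cases hji : j = i
      · subst hji
        simp only [if_pos rfl]
        calc (ad j * a j - bd j * b j) * bd j
            = ad j * (a j * bd j) - bd j * (b j * bd j) := by noncomm_ring
          _ = ad j * (bd j * a j) - bd j * (bd j * b j + 1) := by
              rw [h1, if_pos rfl, h2]
          _ = bd j * (ad j * a j - bd j * b j) - bd j := by
              rw [show ad j * (bd j * a j) = bd j * (ad j * a j) by
                rw [← mul_assoc, h3, mul_assoc]]
              noncomm_ring
      · simp only [if_neg hji, sub_zero]
        calc (ad j * a j - bd j * b j) * bd i
            = ad j * (a j * bd i) - bd j * (b j * bd i) := by noncomm_ring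
          _ = ad j * (bd i * a j) - bd j * (bd i * b j + 0) := by
              rw [h1, if_neg hji, h2]
          _ = bd i * (ad j * a j - bd j * b j) := by
              rw [show ad j * (bd i * a j) = bd i * (ad j * a j) by
                rw [← mul_assoc, h3, mul_assoc],
                show bd j * (bd i * b j + 0) = bd i * (bd j * b j) by
                rw [add_zero, ← mul_assoc, h4, mul_assoc]]
              noncomm_ring
    calc N * bd i = ∑ j ∈ Finset.Icc 1 L, (ad j * a j - bd j * b j) * bd i := by
          rw [hN, Finset.sum_mul]
      _ = ∑ j ∈ Finset.Icc 1 L,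
            (bd i * (ad j * a j - bd j * b j) - (if j = i then bd i else 0)) :=
          Finset.sum_congr rfl key
      _ = bd i * N - bd i := by
          rw [Finset.sum_sub_distrib, ← Finset.mul_sum, Finset.sum_ite_eq' _ i,
            if_pos hi]
  -- N commutes with each valence bond
  have hNC : ∀ i ∈ Finset.Icc 1 L, ∀ j ∈ Finset.Icc 1 L,
      Commute N (ad i * bd j - bd i * ad j) := by
    intro i hi j hj
    have e1 : N * (ad i * bd j) = ad i * bd j * N := by
      rw [← mul_assoc, hNad i hi, add_mul, mul_assoc, hNbd j hj]
      noncomm_ring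
    have e2 : N * (bd i * ad j) = bd i * ad j * N := by
      rw [← mul_assoc, hNbd i hi, sub_mul, mul_assoc, hNad j hj]
      noncomm_ring
    show N * _ = _ * N
    rw [mul_sub, sub_mul, e1, e2]
  have hall : ∀ x ∈ (List.range (L - 1)).map
      (fun k => (ad (k + 1) * bd (k + 2) - bd (k + 1) * ad (k + 2)) ^ M (k + 1)),
      Commute N x := by
    intro x hx
    rcases List.mem_map.mp hx with ⟨k, hk, rfl⟩
    have hk' : k < L - 1 := List.mem_range.mp hk
    have h1 : k + 1 ∈ Finset.Icc 1 L := by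
      simp only [Finset.mem_Icc]; omega
    have h2 : k + 2 ∈ Finset.Icc 1 L := by
      simp only [Finset.mem_Icc]; omega
    exact (hNC _ h1 _ h2).pow_right _
  exact (Commute.list_prod_right _ _ hall)
end
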